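/- Let A be a unital C*-algebra with character ε, (ρ, K) a unital *-representation, D ∈ B(k; K), d ∈ k, ξ ∈ K, t ∈ ℝ. Define δ(a) = (ρ(a) − ε(a))|ξ⟩ and λ(a) = ε(a)(t − ‖ξ‖²) + ⟨ξ, ρ(a)ξ⟩. Suppose D is a partial isometry, Dd = 0, DD* commutes with ρ(A), t = −‖d‖², and DD*δ(a) = δ(a) for all a. Then for all a, b ∈ A: (i) D*ρ(a)DD*ρ(b)D = D*ρ(ab)D, and (ii) λ(a*b) = ⟨D*δ(a)1 + ε(a)d, D*δ(b)1 + ε(b)d⟩ + λ(a*)ε(b) + ε(a*)λ(b). -/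

import Mathlib

/-- Under the conditions `D` a partial isometry, `Dd = 0`, `DD* ∈ ρ(A)'`, `t = −‖d‖²` and
`DD*δ = δ`, the block-matrix structure relations (i) and (ii) hold, where
`δ(a) = (ρ(a) − ε(a))|ξ⟩` and `λ(a) = ε(a)(t − ‖ξ‖²) + ⟨ξ, ρ(a)ξ⟩`. -/
theorem stmt_11 {A : Type*} [NormedRing A] [StarRing A] [CStarRing A]
    [NormedAlgebra ℂ A] [StarModule ℂ A]
    {k K : Type*}
    [NormedAddCommGroup k] [InnerProductSpace ℂ k] [CompleteSpace k]
    [NormedAddCommGroup K] [InnerProductSpace ℂ K] [CompleteSpace K]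
    (ε : A →⋆ₐ[ℂ] ℂ) (ρ : A →⋆ₐ[ℂ] (K →L[ℂ] K))
    (D : k →L[ℂ] K) (d : k) (ξ : K) (t : ℝ)
    (δ : A → K) (hδ : ∀ a : A, δ a = ρ a ξ - ε a • ξ)
    (lam : A → ℂ)
    (hlam : ∀ a : A, lam a = ε a * ((t : ℂ) - (‖ξ‖ ^ 2 : ℝ)) + (inner ℂ ξ (ρ a ξ) : ℂ))
    (hpi : D ∘L ContinuousLinearMap.adjoint D ∘L D = D)
    (hDd : D d = 0)
    (hcomm : ∀ a : A, (D ∘L ContinuousLinearMap.adjoint D) ∘L ρ a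
        = ρ a ∘L (D ∘L ContinuousLinearMap.adjoint D))
    (ht : t = -‖d‖ ^ 2)
    (hDDδ : ∀ a : A, (D ∘L ContinuousLinearMap.adjoint D) (δ a) = δ a) :
    (∀ a b : A,
      ContinuousLinearMap.adjoint D ∘L ρ a ∘L D
          ∘L ContinuousLinearMap.adjoint D ∘L ρ b ∘L D
        = ContinuousLinearMap.adjoint D ∘L ρ (a * b) ∘L D)
    ∧ (∀ a b : A,
      lam (star a * b)
        = (inner ℂ (ContinuousLinearMap.adjoint D (δ a) + ε a • d)
            (ContinuousLinearMap.adjoint D (δ b) + ε b • d) : ℂ)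
          + lam (star a) * ε b + ε (star a) * lam b) := by
  have hadj : ∀ a : A, ContinuousLinearMap.adjoint (ρ a) = ρ (star a) := by
    intro a
    rw [← ContinuousLinearMap.star_eq_adjoint, ← map_star]
  constructor
  · intro a b
    ext x
    simp only [ContinuousLinearMap.comp_apply]
    have h1 : D (ContinuousLinearMap.adjoint D (ρ b (D x)))
        = ρ b (D (ContinuousLinearMap.adjoint D (D x))) := by
      have := congrArg (fun T : K →L[ℂ] K => T (D x)) (hcomm b)
      simpa using this
    have h2 : D (ContinuousLinearMap.adjoint D (D x)) = D x := by
      have := congrArg (fun T : k →L[ℂ] K => T x) hpi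
      simpa using this
    rw [h1, h2, map_mul]
    rfl
  · intro a b
    have hd2 : (inner ℂ d d : ℂ) = ((‖d‖ ^ 2 : ℝ) : ℂ) := by
      exact_mod_cast inner_self_eq_norm_sq_to_K (𝕜 := ℂ) d
    have hξ2 : (inner ℂ ξ ξ : ℂ) = ((‖ξ‖ ^ 2 : ℝ) : ℂ) := by
      exact_mod_cast inner_self_eq_norm_sq_to_K (𝕜 := ℂ) ξ
    have hDDb : D (ContinuousLinearMap.adjoint D (δ b)) = δ b := by
      simpa using hDDδ b
    have h1 : (inner ℂ (ContinuousLinearMap.adjoint D (δ a))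
        (ContinuousLinearMap.adjoint D (δ b)) : ℂ) = inner ℂ (δ a) (δ b) := by
      rw [ContinuousLinearMap.adjoint_inner_left, hDDb]
    have h2 : (inner ℂ (ContinuousLinearMap.adjoint D (δ a)) (ε b • d) : ℂ) = 0 := by
      rw [inner_smul_right, ContinuousLinearMap.adjoint_inner_left, hDd,
        inner_zero_right, mul_zero]
    have h3 : (inner ℂ (ε a • d) (ContinuousLinearMap.adjoint D (δ b)) : ℂ) = 0 := by
      rw [inner_smul_left, ContinuousLinearMap.adjoint_inner_right, hDd,
        inner_zero_left, mul_zero]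
    have h4 : (inner ℂ (ε a • d) (ε b • d) : ℂ)
        = (starRingEnd ℂ) (ε a) * ε b * (‖d‖ ^ 2 : ℝ) := by
      rw [inner_smul_left, inner_smul_right, hd2]
      ring
    have hab : (inner ℂ (ρ a ξ) (ρ b ξ) : ℂ) = inner ℂ ξ (ρ (star a * b) ξ) := by
      rw [← ContinuousLinearMap.adjoint_inner_right, hadj, map_mul]
      rfl
    have ha : (inner ℂ (ρ a ξ) ξ : ℂ) = inner ℂ ξ (ρ (star a) ξ) := by
      rw [← ContinuousLinearMap.adjoint_inner_right, hadj]
    have hδδ : (inner ℂ (δ a) (δ b) : ℂ)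
        = inner ℂ ξ (ρ (star a * b) ξ)
          - (starRingEnd ℂ) (ε a) * inner ℂ ξ (ρ b ξ)
          - ε b * inner ℂ ξ (ρ (star a) ξ)
          + (starRingEnd ℂ) (ε a) * ε b * (‖ξ‖ ^ 2 : ℝ) := by
      rw [hδ a, hδ b]
      simp only [inner_sub_left, inner_sub_right, inner_smul_left, inner_smul_right]
      rw [hab, ha, hξ2]
      push_cast
      ring
    simp only [inner_add_left, inner_add_right]
    rw [h1, h2, h3, h4, hδδ, hlam, hlam, hlam,
      map_mul, map_star, Complex.star_def, ht]
    push_cast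
    ring
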